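/- Let m be a nonnegative integer and k = 4m+3. Suppose x, y, z are nonnegative integers with x ⊕ y ⊕ z = 0 and y ≤ ⌊(x+z)/k⌋. Then: (i) u ⊕ y ⊕ z ≠ 0 for every nonnegative integer u < x; (ii) x ⊕ v ⊕ z ≠ 0 for every nonnegative integer v < y; (iii) x ⊕ y ⊕ w ≠ 0 for every nonnegative integer w < z; (iv) x ⊕ v ⊕ w ≠ 0 for all nonnegative integers v, w with v < y, w < z and v = ⌊(x+w)/k⌋; (v) u ⊕ v ⊕ z ≠ 0 for all nonnegative integers u, v with u < x, v < y and v = ⌊(u+z)/k⌋. -/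

import Mathlib

private lemma bit_eq (b : Bool) (n : ℕ) : Nat.bit b n = 2 * n + b.toNat := by
  cases b <;> simp [Nat.bit] <;> omega

private lemma ldiff_half (a y : ℕ) :
    Nat.ldiff a y = 2 * Nat.ldiff (a / 2) (y / 2) + (a % 2) * (1 - y % 2) := by
  have hA := Nat.mod_two_of_bodd a
  have hY := Nat.mod_two_of_bodd y
  conv_lhs => rw [← Nat.bit_bodd_div2 a, ← Nat.bit_bodd_div2 y, Nat.ldiff_bit]
  rw [bit_eq, Nat.div2_val, Nat.div2_val]
  cases ha : a.bodd <;> cases hy : y.bodd <;> simp [ha, hy] at hA hY ⊢ <;>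
    (try simp [hA, hY]) <;> omega

private lemma xor_half (a y : ℕ) :
    a ^^^ y = 2 * ((a / 2) ^^^ (y / 2)) + (a % 2 + y % 2) % 2 := by
  have hA := Nat.mod_two_of_bodd a
  have hY := Nat.mod_two_of_bodd y
  conv_lhs => rw [← Nat.bit_bodd_div2 a, ← Nat.bit_bodd_div2 y, Nat.xor_bit]
  rw [bit_eq, Nat.div2_val, Nat.div2_val]
  cases ha : a.bodd <;> cases hy : y.bodd <;> simp [ha, hy] at hA hY ⊢ <;>
    (try simp [hA, hY]) <;> omega

private lemma and_half (a y : ℕ) :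
    a &&& y = 2 * ((a / 2) &&& (y / 2)) + (a % 2) * (y % 2) := by
  have hA := Nat.mod_two_of_bodd a
  have hY := Nat.mod_two_of_bodd y
  conv_lhs => rw [← Nat.bit_bodd_div2 a, ← Nat.bit_bodd_div2 y, Nat.land_bit]
  rw [bit_eq, Nat.div2_val, Nat.div2_val]
  cases ha : a.bodd <;> cases hy : y.bodd <;> simp [ha, hy] at hA hY ⊢ <;>
    (try simp [hA, hY]) <;> omega

private lemma add_eq_xor_add_two_and (a b : ℕ) : a + b = (a ^^^ b) + 2 * (a &&& b) := by
  induction a using Nat.strong_induction_on generalizing b with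
  | _ a ih =>
    rcases Nat.eq_zero_or_pos a with rfl | ha
    · simp
    have h1 := xor_half a b
    have h2 := and_half a b
    have h3 := ih (a / 2) (by omega) (b / 2)
    have h4 : a % 2 < 2 := Nat.mod_lt _ (by norm_num)
    have h5 : b % 2 < 2 := Nat.mod_lt _ (by norm_num)
    have ha2 := Nat.div_add_mod a 2
    have hb2 := Nat.div_add_mod b 2
    interval_cases h : (a % 2) <;> interval_cases h' : (b % 2) <;> omega

private lemma key (m : ℕ) : ∀ y a v : ℕ, (2 * m + 1) * y ≤ Nat.ldiff a y → v < y →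
    (2 * m + 1) * (v + 1) < Nat.ldiff a v := by
  intro y
  induction y using Nat.strong_induction_on with
  | _ y ih =>
  intro a v H hv
  rw [ldiff_half a y] at H
  rw [ldiff_half a v]
  have hyd : 2 * (y / 2) + y % 2 = y := Nat.div_add_mod y 2
  have hvd : 2 * (v / 2) + v % 2 = v := Nat.div_add_mod v 2
  have eY : (2 * m + 1) * y = 2 * ((2 * m + 1) * (y / 2)) + (2 * m + 1) * (y % 2) := by
    conv_lhs => rw [← hyd]
    ring
  have eV : (2 * m + 1) * (v + 1)
      = 2 * ((2 * m + 1) * (v / 2)) + (2 * m + 1) * (v % 2) + (2 * m + 1) := by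
    conv_lhs => rw [← hvd]
    ring
  rw [eY] at H
  rw [eV]
  rcases Nat.lt_or_ge (v / 2) (y / 2) with hc | hc
  · have hpre : (2 * m + 1) * (y / 2) ≤ Nat.ldiff (a / 2) (y / 2) := by
      rcases Nat.mod_two_eq_zero_or_one y with h | h <;> rw [h] at H <;>
      · generalize (2 * m + 1) * (y / 2) = P at H ⊢
        generalize Nat.ldiff (a / 2) (y / 2) = D at H ⊢
        omega
    have hIH := ih (y / 2) (by omega) (a / 2) (v / 2) hpre hc
    have eV2 : (2 * m + 1) * (v / 2 + 1) = (2 * m + 1) * (v / 2) + (2 * m + 1) := by ring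
    rw [eV2] at hIH
    rcases Nat.mod_two_eq_zero_or_one v with h | h <;> rw [h] <;>
    · generalize (2 * m + 1) * (v / 2) = Q at hIH ⊢
      generalize Nat.ldiff (a / 2) (v / 2) = E at hIH ⊢
      omega
  · have hvy : v / 2 = y / 2 := by omega
    have hy1 : y % 2 = 1 := by omega
    have hv0 : v % 2 = 0 := by omega
    rw [hy1] at H
    rw [hv0, hvy]
    generalize (2 * m + 1) * (y / 2) = P at H ⊢
    generalize Nat.ldiff (a / 2) (y / 2) = D at H ⊢
    omega

private lemma and_xor_eq_ldiff (a v : ℕ) : a &&& (a ^^^ v) = Nat.ldiff a v := by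
  apply Nat.eq_of_testBit_eq
  intro i
  simp only [Nat.testBit_and, Nat.testBit_xor, Nat.testBit_ldiff]
  cases a.testBit i <;> cases v.testBit i <;> simp

private lemma xor_right_cancel' {a b c : ℕ} (h : a ^^^ c = b ^^^ c) : a = b := by
  have := congrArg (fun t => t ^^^ c) h
  simpa [Nat.xor_assoc] using this

theorem stmt11 (m k : ℕ) (hk : k = 4 * m + 3) (x y z : ℕ)
    (h0 : x ^^^ y ^^^ z = 0) (h1 : y ≤ (x + z) / k) :
    (∀ u < x, u ^^^ y ^^^ z ≠ 0) ∧
    (∀ v < y, x ^^^ v ^^^ z ≠ 0) ∧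
    (∀ w < z, x ^^^ y ^^^ w ≠ 0) ∧
    (∀ v w : ℕ, v < y → w < z → v = (x + w) / k → x ^^^ v ^^^ w ≠ 0) ∧
    (∀ u v : ℕ, u < x → v < y → v = (u + z) / k → u ^^^ v ^^^ z ≠ 0) := by
  subst hk
  have hkpos : 0 < 4 * m + 3 := by omega
  have hz : x ^^^ y = z := xor_eq_zero_iff.mp h0
  have hzy : z ^^^ y = x := by rw [← hz, Nat.xor_assoc, Nat.xor_self, Nat.xor_zero]
  -- from h1 : (4m+3) * y ≤ x + z
  have hK : y * (4 * m + 3) ≤ x + z := (Nat.le_div_iff_mul_le hkpos).mp h1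
  have hsum : x + z = y + 2 * (x &&& z) := by
    rw [add_eq_xor_add_two_and x z]
    congr 1
    rw [← hz, ← Nat.xor_assoc, Nat.xor_self, Nat.zero_xor]
  have haxz : x &&& z = Nat.ldiff x y := by rw [← hz, and_xor_eq_ldiff]
  have hazx : x &&& z = Nat.ldiff z y := by
    rw [Nat.and_comm, ← hzy]
    exact and_xor_eq_ldiff z y
  have hHypA : (2 * m + 1) * y ≤ Nat.ldiff x y := by
    have e : y * (4 * m + 3) = 2 * ((2 * m + 1) * y) + y := by ring
    rw [e, hsum, haxz] at hK
    generalize (2 * m + 1) * y = P at hK ⊢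
    generalize Nat.ldiff x y = D at hK ⊢
    omega
  have hHypB : (2 * m + 1) * y ≤ Nat.ldiff z y := by
    have e : y * (4 * m + 3) = 2 * ((2 * m + 1) * y) + y := by ring
    rw [e, hsum, hazx] at hK
    generalize (2 * m + 1) * y = P at hK ⊢
    generalize Nat.ldiff z y = D at hK ⊢
    omega
  refine ⟨?_, ?_, ?_, ?_, ?_⟩
  · intro u hu hcon
    have h' : u ^^^ y = z := xor_eq_zero_iff.mp hcon
    have : u = x := xor_right_cancel' (h'.trans hz.symm)
    omega
  · intro v hv hcon
    have h' : x ^^^ v = z := xor_eq_zero_iff.mp hcon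
    have h'' : v ^^^ x = y ^^^ x := by
      rw [Nat.xor_comm v x, Nat.xor_comm y x]
      exact h'.trans hz.symm
    have : v = y := xor_right_cancel' h''
    omega
  · intro w hw hcon
    have h' : x ^^^ y = w := xor_eq_zero_iff.mp hcon
    have : w = z := h'.symm.trans hz
    omega
  · intro v w hv hw hdv hcon
    have hxv : x ^^^ v = w := xor_eq_zero_iff.mp hcon
    have hxw : x ^^^ w = v := by rw [← hxv, ← Nat.xor_assoc, Nat.xor_self, Nat.zero_xor]
    have e1 : x + w = v + 2 * (x &&& w) := by
      rw [add_eq_xor_add_two_and x w, hxw]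
    have e2 : x &&& w = Nat.ldiff x v := by rw [← hxv, and_xor_eq_ldiff]
    have hmod := Nat.div_add_mod (x + w) (4 * m + 3)
    have hr : (x + w) % (4 * m + 3) < 4 * m + 3 := Nat.mod_lt _ hkpos
    rw [← hdv] at hmod
    have hkey := key m y x v hHypA hv
    have e3 : (4 * m + 3) * v = 2 * ((2 * m + 1) * v) + v := by ring
    have e4 : (2 * m + 1) * (v + 1) = (2 * m + 1) * v + (2 * m + 1) := by ring
    rw [e3] at hmod
    rw [e4] at hkey
    rw [e2] at e1
    generalize (2 * m + 1) * v = Q at hmod hkey ⊢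
    generalize Nat.ldiff x v = L at hkey e1
    omega
  · intro u v hu hv hdv hcon
    have huv : u ^^^ v = z := xor_eq_zero_iff.mp hcon
    have hzv : z ^^^ v = u := by rw [← huv, Nat.xor_assoc, Nat.xor_self, Nat.xor_zero]
    have huz : u ^^^ z = v := by
      rw [← hzv, Nat.xor_comm z v, Nat.xor_assoc, Nat.xor_self, Nat.xor_zero]
    have e1 : u + z = v + 2 * (u &&& z) := by
      rw [add_eq_xor_add_two_and u z, huz]
    have e2 : u &&& z = Nat.ldiff z v := by
      rw [Nat.and_comm, ← hzv]
      exact and_xor_eq_ldiff z v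
    have hmod := Nat.div_add_mod (u + z) (4 * m + 3)
    have hr : (u + z) % (4 * m + 3) < 4 * m + 3 := Nat.mod_lt _ hkpos
    rw [← hdv] at hmod
    have hkey := key m y z v hHypB hv
    have e3 : (4 * m + 3) * v = 2 * ((2 * m + 1) * v) + v := by ring
    have e4 : (2 * m + 1) * (v + 1) = (2 * m + 1) * v + (2 * m + 1) := by ring
    rw [e3] at hmod
    rw [e4] at hkey
    rw [e2] at e1
    generalize (2 * m + 1) * v = Q at hmod hkey ⊢
    generalize Nat.ldiff z v = L at hkey e1
    omega
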